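/- Any uniform limit u of a subsequence u_{λ_i} (λ_i → 1⁻) of the discounted solutions satisfies, for every continuous subsolution w of the critical equation, u(x) ≥ w(x) − sup_{μ ∈ M₀} ∫_M w dμ for all x ∈ M, where M₀ is the set of projected Mather measures. -/

import Mathlib

open MeasureTheory Filter Topology Set
open scoped Classical

namespace WKAux

variable {X : Type*}

/-- mixed-radix cell index at level `m` -/
def cIdx (Nn : ℕ → ℕ) (φ : ℕ → X → ℕ) : ℕ → X → ℕ
  | 0 => φ 0
  | m+1 => fun x => cIdx Nn φ m x * Nn (m+1) + φ (m+1) x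

/-- number of cells at level `m` -/
def lev (Nn : ℕ → ℕ) : ℕ → ℕ
  | 0 => Nn 0
  | m+1 => lev Nn m * Nn (m+1)

def cell (Nn : ℕ → ℕ) (φ : ℕ → X → ℕ) (m k : ℕ) : Set X := cIdx Nn φ m ⁻¹' {k}

variable {Nn : ℕ → ℕ} {φ : ℕ → X → ℕ}

theorem cIdx_lt (hφ : ∀ m x, φ m x < Nn m) (m : ℕ) (x : X) :
    cIdx Nn φ m x < lev Nn m := by
  induction m with
  | zero => exact hφ 0 x
  | succ m ih =>
      have h1 : cIdx Nn φ m x + 1 ≤ lev Nn m := ih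
      calc cIdx Nn φ m x * Nn (m+1) + φ (m+1) x
          < (cIdx Nn φ m x + 1) * Nn (m+1) := by
            rw [add_mul, one_mul]; exact Nat.add_lt_add_left (hφ (m+1) x) _
        _ ≤ lev Nn m * Nn (m+1) := Nat.mul_le_mul_right _ h1

theorem cIdx_succ_div (hφ : ∀ m x, φ m x < Nn m) (m : ℕ) (x : X) :
    cIdx Nn φ (m+1) x / Nn (m+1) = cIdx Nn φ m x := by
  show (cIdx Nn φ m x * Nn (m+1) + φ (m+1) x) / Nn (m+1) = cIdx Nn φ m x
  rw [mul_comm (cIdx Nn φ m x) (Nn (m+1)),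
    Nat.mul_add_div (Nat.lt_of_le_of_lt (Nat.zero_le _) (hφ (m+1) x)),
    Nat.div_eq_of_lt (hφ (m+1) x), add_zero]

theorem cIdx_eq_φ_eq (hφ : ∀ m x, φ m x < Nn m) (m : ℕ) {x y : X}
    (h : cIdx Nn φ m x = cIdx Nn φ m y) : φ m x = φ m y := by
  cases m with
  | zero => exact h
  | succ m =>
      have hx : cIdx Nn φ (m+1) x % Nn (m+1) = φ (m+1) x := by
        show (cIdx Nn φ m x * Nn (m+1) + φ (m+1) x) % Nn (m+1) = φ (m+1) x
        rw [mul_comm (cIdx Nn φ m x) (Nn (m+1)), Nat.mul_add_mod, Nat.mod_eq_of_lt (hφ (m+1) x)]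
      have hy : cIdx Nn φ (m+1) y % Nn (m+1) = φ (m+1) y := by
        show (cIdx Nn φ m y * Nn (m+1) + φ (m+1) y) % Nn (m+1) = φ (m+1) y
        rw [mul_comm (cIdx Nn φ m y) (Nn (m+1)), Nat.mul_add_mod, Nat.mod_eq_of_lt (hφ (m+1) y)]
      rw [← hx, ← hy, h]

/-- points in the same cell are close -/
theorem dist_le_of_cell [PseudoMetricSpace X] (pts : ℕ → X)
    (hφ : ∀ m x, φ m x < Nn m)
    (hd : ∀ m x, dist x (pts (φ m x)) < (1/2 : ℝ)^m)
    (m : ℕ) {x y : X} (h : cIdx Nn φ m x = cIdx Nn φ m y) :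
    dist x y ≤ 2 * (1/2 : ℝ)^m := by
  have := cIdx_eq_φ_eq hφ m h
  calc dist x y ≤ dist x (pts (φ m x)) + dist (pts (φ m y)) y := by
        rw [this]; exact dist_triangle _ _ _
    _ ≤ (1/2:ℝ)^m + (1/2:ℝ)^m := by
        refine add_le_add (le_of_lt (hd m x)) ?_
        rw [dist_comm]; exact le_of_lt (hd m y)
    _ = 2 * (1/2:ℝ)^m := by ring

theorem cell_eq_biUnion (hφ : ∀ m x, φ m x < Nn m) (m k : ℕ) :
    cell Nn φ m k = ⋃ r ∈ Finset.range (Nn (m+1)), cell Nn φ (m+1) (k * Nn (m+1) + r) := by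
  ext x
  simp only [cell, mem_preimage, mem_singleton_iff, Set.mem_iUnion, Finset.mem_range]
  constructor
  · intro h
    exact ⟨φ (m+1) x, hφ (m+1) x, by show cIdx Nn φ m x * Nn (m+1) + _ = _; rw [h]⟩
  · rintro ⟨r, hr, h⟩
    have h' : cIdx Nn φ m x * Nn (m+1) + φ (m+1) x = k * Nn (m+1) + r := h
    have h1 := congrArg (· / Nn (m+1)) h'
    have hpos : 0 < Nn (m+1) := Nat.lt_of_le_of_lt (Nat.zero_le _) (hφ (m+1) x)
    rw [mul_comm (cIdx Nn φ m x), mul_comm k] at h1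
    rwa [Nat.mul_add_div hpos, Nat.mul_add_div hpos, Nat.div_eq_of_lt (hφ (m+1) x),
      Nat.div_eq_of_lt hr, add_zero, add_zero] at h1

theorem cell_disjoint (m : ℕ) {k k' : ℕ} (h : k ≠ k') :
    Disjoint (cell Nn φ m k) (cell (X := X) Nn φ m k') := by
  rw [Set.disjoint_left]
  rintro x hx hx'
  exact h (hx.symm.trans hx')

theorem univ_eq_biUnion_cell (hφ : ∀ m x, φ m x < Nn m) (m : ℕ) :
    (Set.univ : Set X) = ⋃ k ∈ Finset.range (lev Nn m), cell Nn φ m k := by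
  ext x
  simp only [Set.mem_univ, true_iff, Set.mem_iUnion, Finset.mem_range]
  exact ⟨cIdx Nn φ m x, cIdx_lt hφ m x, rfl⟩

end WKAux

namespace WKAux
variable {X : Type*} {Nn : ℕ → ℕ} {φ : ℕ → X → ℕ} {A : Set X → ℝ}

noncomputable def ell (A : Set X → ℝ) (Nn : ℕ → ℕ) (φ : ℕ → X → ℕ) (m k : ℕ) : ℝ :=
  ∑ j ∈ Finset.range k, A (cell Nn φ m j)

noncomputable def km (A : Set X → ℝ) (Nn : ℕ → ℕ) (φ : ℕ → X → ℕ) (m : ℕ) (t : ℝ) : ℕ :=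
  Nat.findGreatest (fun k => ell A Nn φ m k ≤ t ∧ k < lev Nn m) (lev Nn m)

theorem lev_pos (hNpos : ∀ m, 0 < Nn m) (m : ℕ) : 0 < lev Nn m := by
  induction m with
  | zero => exact hNpos 0
  | succ m ih => exact Nat.mul_pos ih (hNpos (m+1))

section ellLemmas
variable (hA0 : ∀ m k, 0 ≤ A (cell Nn φ m k))

theorem ell_zero (m : ℕ) : ell A Nn φ m 0 = 0 := Finset.sum_range_zero _

include hA0 in
theorem ell_mono (m : ℕ) {k k' : ℕ} (h : k ≤ k') : ell A Nn φ m k ≤ ell A Nn φ m k' := by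
  apply Finset.sum_le_sum_of_subset_of_nonneg (Finset.range_subset_range.2 h)
  intro j _ _
  exact hA0 m j

theorem ell_succ (m k : ℕ) :
    ell A Nn φ m (k+1) = ell A Nn φ m k + A (cell Nn φ m k) := Finset.sum_range_succ _ _

theorem ell_nest
    (hAadd : ∀ m k, A (cell Nn φ m k)
      = ∑ r ∈ Finset.range (Nn (m+1)), A (cell Nn φ (m+1) (k * Nn (m+1) + r)))
    (m k : ℕ) : ell A Nn φ (m+1) (k * Nn (m+1)) = ell A Nn φ m k := by
  induction k with
  | zero => simp [ell]
  | succ k ih =>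
      have : (k+1) * Nn (m+1) = k * Nn (m+1) + Nn (m+1) := by ring
      rw [this]
      unfold ell
      rw [Finset.sum_range_add]
      rw [show (∑ j ∈ Finset.range (k * Nn (m+1)), A (cell Nn φ (m+1) j)) = ell A Nn φ (m+1) (k * Nn (m+1)) from rfl, ih]
      rw [Finset.sum_range_succ, ← hAadd m k]
      rfl
end ellLemmas

section kmLemmas
variable (hNpos : ∀ m, 0 < Nn m) (hA0 : ∀ m k, 0 ≤ A (cell Nn φ m k))
  (hA1 : ∀ m, ∑ k ∈ Finset.range (lev Nn m), A (cell Nn φ m k) = 1)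

include hNpos hA0 hA1

theorem km_spec (m : ℕ) {t : ℝ} (ht : t ∈ Set.Ico (0:ℝ) 1) :
    km A Nn φ m t < lev Nn m ∧ ell A Nn φ m (km A Nn φ m t) ≤ t
      ∧ t < ell A Nn φ m (km A Nn φ m t + 1) := by
  classical
  have hP0 : ell A Nn φ m 0 ≤ t ∧ 0 < lev Nn m := by
    rw [ell_zero]; exact ⟨ht.1, lev_pos hNpos m⟩
  have hspec := Nat.findGreatest_spec (P := fun k => ell A Nn φ m k ≤ t ∧ k < lev Nn m)
    (n := lev Nn m) (Nat.zero_le _) hP0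
  have hlt : km A Nn φ m t < lev Nn m := hspec.2
  refine ⟨hlt, hspec.1, ?_⟩
  have hellone : ell A Nn φ m (lev Nn m) = 1 := hA1 m
  by_cases hcase : km A Nn φ m t + 1 < lev Nn m
  · have hng := Nat.findGreatest_is_greatest (P := fun k => ell A Nn φ m k ≤ t ∧ k < lev Nn m)
      (n := lev Nn m) (k := km A Nn φ m t + 1) (Nat.lt_succ_self _) (le_of_lt hcase)
    exact lt_of_not_ge fun hle => hng ⟨hle, hcase⟩
  · have heq : km A Nn φ m t + 1 = lev Nn m := by omega
    rw [heq, hellone]; exact ht.2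

theorem km_unique (m : ℕ) {t : ℝ} (ht : t ∈ Set.Ico (0:ℝ) 1) {k : ℕ}
    (hk : k < lev Nn m) (h1 : ell A Nn φ m k ≤ t) (h2 : t < ell A Nn φ m (k+1)) :
    km A Nn φ m t = k := by
  classical
  have hge : k ≤ km A Nn φ m t :=
    Nat.le_findGreatest (le_of_lt hk) ⟨h1, hk⟩
  have hspec := km_spec hNpos hA0 hA1 m ht
  by_contra hne
  have hgt : k + 1 ≤ km A Nn φ m t := by omega
  exact absurd (le_trans (ell_mono hA0 m hgt) hspec.2.1) (not_le.2 h2)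

theorem km_succ_range
    (hAadd : ∀ m k, A (cell Nn φ m k)
      = ∑ r ∈ Finset.range (Nn (m+1)), A (cell Nn φ (m+1) (k * Nn (m+1) + r)))
    (m : ℕ) {t : ℝ} (ht : t ∈ Set.Ico (0:ℝ) 1) :
    km A Nn φ m t * Nn (m+1) ≤ km A Nn φ (m+1) t
      ∧ km A Nn φ (m+1) t < (km A Nn φ m t + 1) * Nn (m+1) := by
  classical
  obtain ⟨hlt, hle, hgt⟩ := km_spec hNpos hA0 hA1 m ht
  set k := km A Nn φ m t with hk
  constructor
  · apply Nat.le_findGreatest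
    · calc k * Nn (m+1) ≤ lev Nn m * Nn (m+1) := Nat.mul_le_mul_right _ (le_of_lt hlt)
        _ = lev Nn (m+1) := rfl
    · refine ⟨?_, ?_⟩
      · rw [ell_nest hAadd]; exact hle
      · show k * Nn (m+1) < lev Nn m * Nn (m+1)
        exact (Nat.mul_lt_mul_right (hNpos (m+1))).2 hlt
  · by_contra hge
    push_neg at hge
    obtain ⟨hlt', hle', _⟩ := km_spec hNpos hA0 hA1 (m+1) ht
    have : ell A Nn φ (m+1) ((k+1) * Nn (m+1)) ≤ ell A Nn φ (m+1) (km A Nn φ (m+1) t) :=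
      ell_mono hA0 (m+1) hge
    rw [ell_nest hAadd] at this
    exact absurd (le_trans this hle') (not_le.2 hgt)

theorem cell_km_subset
    (hφ : ∀ m x, φ m x < Nn m)
    (hAadd : ∀ m k, A (cell Nn φ m k)
      = ∑ r ∈ Finset.range (Nn (m+1)), A (cell Nn φ (m+1) (k * Nn (m+1) + r)))
    {t : ℝ} (ht : t ∈ Set.Ico (0:ℝ) 1) {m m' : ℕ} (h : m ≤ m') :
    cell Nn φ m' (km A Nn φ m' t) ⊆ cell Nn φ m (km A Nn φ m t) := by
  induction m' with
  | zero => rw [Nat.le_zero.1 h]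
  | succ m' ih =>
      rcases Nat.lt_or_ge m (m'+1) with hlt | hge
      · have hm : m ≤ m' := by omega
        refine subset_trans ?_ (ih hm)
        intro x hx
        have hx' : cIdx Nn φ (m'+1) x = km A Nn φ (m'+1) t := hx
        obtain ⟨hlo, hhi⟩ := km_succ_range hNpos hA0 hA1 hAadd m' ht
        show cIdx Nn φ m' x = km A Nn φ m' t
        rw [← cIdx_succ_div hφ m' x, hx']
        exact Nat.div_eq_of_lt_le hlo hhi
      · have : m = m' + 1 := by omega
        rw [this]

end kmLemmas
end WKAux

namespace WKAux
variable {X : Type*}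

theorem exists_weak_limit [MetricSpace X] [CompactSpace X] [Nonempty X]
    [MeasurableSpace X] [BorelSpace X] (μ : ℕ → Measure X)
    (hμ : ∀ i, IsProbabilityMeasure (μ i)) (U : Ultrafilter ℕ) :
    ∃ ν : Measure X, IsProbabilityMeasure ν ∧
      ∀ f : C(X, ℝ), Tendsto (fun i => ∫ x, f x ∂(μ i)) (U : Filter ℕ) (𝓝 (∫ x, f x ∂ν)) := by
  classical
  haveI : (U : Filter ℕ).NeBot := U.neBot
  set pts := TopologicalSpace.denseSeq X with hpts
  have hdense : DenseRange pts := TopologicalSpace.denseRange_denseSeq X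
  -- finite nets
  have hnet : ∀ m : ℕ, ∃ N : ℕ, ∀ x : X, ∃ n, n < N ∧ dist x (pts n) < (1/2:ℝ)^m := by
    intro m
    have hpos : (0:ℝ) < (1/2)^m := by positivity
    have hcover : (Set.univ : Set X) ⊆ ⋃ n : ℕ, Metric.ball (pts n) ((1/2)^m) := by
      intro x _
      obtain ⟨n, hn⟩ := Metric.denseRange_iff.1 hdense x _ hpos
      exact Set.mem_iUnion.2 ⟨n, by simpa [Metric.mem_ball] using hn⟩
    obtain ⟨s, hs⟩ := isCompact_univ.elim_finite_subcover _
      (fun n : ℕ => Metric.isOpen_ball) hcover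
    refine ⟨(s.sup id) + 1, fun x => ?_⟩
    obtain ⟨n, hns, hn⟩ : ∃ n ∈ s, x ∈ Metric.ball (pts n) ((1/2:ℝ)^m) := by
      simpa using hs (Set.mem_univ x)
    refine ⟨n, ?_, by simpa [Metric.mem_ball] using hn⟩
    have : n ≤ s.sup id := Finset.le_sup (f := id) hns
    omega
  choose Nn hNn using hnet
  have hNpos : ∀ m, 0 < Nn m := by
    intro m
    obtain ⟨n, hn, _⟩ := hNn m (Classical.arbitrary X)
    omega
  -- rounding maps
  let φ : ℕ → X → ℕ := fun m x => Nat.find (hNn m x)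
  have hφlt : ∀ m x, φ m x < Nn m := fun m x => (Nat.find_spec (hNn m x)).1
  have hφd : ∀ m x, dist x (pts (φ m x)) < (1/2:ℝ)^m := fun m x => (Nat.find_spec (hNn m x)).2
  have hSmeas : ∀ m k, MeasurableSet {x : X | k < Nn m ∧ dist x (pts k) < (1/2:ℝ)^m} := by
    intro m k
    by_cases hk : k < Nn m
    · have : {x : X | k < Nn m ∧ dist x (pts k) < (1/2:ℝ)^m}
          = Metric.ball (pts k) ((1/2:ℝ)^m) := by
        ext y; simp [Metric.mem_ball, hk, dist_comm]
      rw [this]; exact measurableSet_ball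
    · have : {x : X | k < Nn m ∧ dist x (pts k) < (1/2:ℝ)^m} = ∅ := by
        ext y; simp [hk]
      rw [this]; exact MeasurableSet.empty
  have hφmeas : ∀ m, Measurable (φ m) := by
    intro m
    apply measurable_to_countable'
    intro n
    have hpre : φ m ⁻¹' {n} = {x : X | n < Nn m ∧ dist x (pts n) < (1/2:ℝ)^m}
        ∩ ⋂ k ∈ Finset.range n, {x : X | k < Nn m ∧ dist x (pts k) < (1/2:ℝ)^m}ᶜ := by
      ext x
      simp only [Set.mem_preimage, Set.mem_singleton_iff, Set.mem_inter_iff, Set.mem_iInter,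
        Set.mem_compl_iff, Finset.mem_range, Set.mem_setOf_eq]
      rw [show (φ m x = n) ↔ Nat.find (hNn m x) = n from Iff.rfl, Nat.find_eq_iff]
    rw [hpre]
    exact (hSmeas m n).inter
      (MeasurableSet.biInter (Finset.range n).countable_toSet fun k _ => (hSmeas m k).compl)
  -- cell index measurability
  have hCmeas : ∀ m, Measurable (cIdx Nn φ m) := by
    intro m
    induction m with
    | zero => exact hφmeas 0
    | succ m ih =>
        have : cIdx Nn φ (m+1) = fun x => cIdx Nn φ m x * Nn (m+1) + φ (m+1) x := rfl
        rw [this]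
        exact (ih.mul measurable_const).add (hφmeas (m+1))
  have hcellmeas : ∀ m k, MeasurableSet (cell Nn φ m k) :=
    fun m k => hCmeas m (measurableSet_singleton k)
  -- ultrafilter limits of measures of sets
  have hAex : ∀ s : Set X, ∃ a : ℝ, a ∈ Set.Icc (0:ℝ) 1
      ∧ Tendsto (fun i => (μ i s).toReal) (U : Filter ℕ) (𝓝 a) := by
    intro s
    have hmem : ∀ i, (μ i s).toReal ∈ Set.Icc (0:ℝ) 1 := by
      intro i
      refine ⟨ENNReal.toReal_nonneg, ?_⟩
      have h1 : μ i s ≤ 1 := prob_le_one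
      have := ENNReal.toReal_mono ENNReal.one_ne_top h1
      simpa using this
    obtain ⟨a, ha, hU⟩ := isCompact_Icc.ultrafilter_le_nhds
      (U.map fun i => (μ i s).toReal) (by
        rw [Ultrafilter.coe_map, le_principal_iff, mem_map]
        exact Filter.univ_mem' hmem)
    refine ⟨a, ha, ?_⟩
    rwa [Tendsto, ← Ultrafilter.coe_map]
  choose A hAmem hAlim using hAex
  have hA0 : ∀ m k, 0 ≤ A (cell Nn φ m k) := fun m k => (hAmem _).1
  -- finite additivity of masses per i
  have hsumcells : ∀ i m, ∑ k ∈ Finset.range (lev Nn m), (μ i (cell Nn φ m k)).toReal = 1 := by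
    intro i m
    have hdis : (↑(Finset.range (lev Nn m)) : Set ℕ).PairwiseDisjoint (cell Nn φ m) :=
      fun k _ k' _ hkk' => cell_disjoint m hkk'
    have : μ i Set.univ = ∑ k ∈ Finset.range (lev Nn m), μ i (cell Nn φ m k) := by
      rw [univ_eq_biUnion_cell (Nn := Nn) (φ := φ) hφlt m]
      exact measure_biUnion_finset hdis (fun k _ => hcellmeas m k)
    have h2 := congrArg ENNReal.toReal this
    rw [measure_univ, ENNReal.toReal_sum (fun k _ => measure_ne_top _ _)] at h2
    simpa using h2.symm
  have hsubdiv : ∀ i m k, (μ i (cell Nn φ m k)).toReal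
      = ∑ r ∈ Finset.range (Nn (m+1)), (μ i (cell Nn φ (m+1) (k * Nn (m+1) + r))).toReal := by
    intro i m k
    have hdis : (↑(Finset.range (Nn (m+1))) : Set ℕ).PairwiseDisjoint
        (fun r => cell Nn φ (m+1) (k * Nn (m+1) + r)) := by
      intro r _ r' _ hrr'
      exact cell_disjoint (m+1) (by omega)
    have : μ i (cell Nn φ m k)
        = ∑ r ∈ Finset.range (Nn (m+1)), μ i (cell Nn φ (m+1) (k * Nn (m+1) + r)) := by
      rw [cell_eq_biUnion (Nn := Nn) (φ := φ) hφlt m k]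
      exact measure_biUnion_finset hdis (fun r _ => hcellmeas (m+1) _)
    rw [this, ENNReal.toReal_sum (fun k _ => measure_ne_top _ _)]
  have hAadd : ∀ m k, A (cell Nn φ m k)
      = ∑ r ∈ Finset.range (Nn (m+1)), A (cell Nn φ (m+1) (k * Nn (m+1) + r)) := by
    intro m k
    have h1 : Tendsto (fun i => (μ i (cell Nn φ m k)).toReal) (U : Filter ℕ)
        (𝓝 (∑ r ∈ Finset.range (Nn (m+1)), A (cell Nn φ (m+1) (k * Nn (m+1) + r)))) := by
      have := tendsto_finset_sum (Finset.range (Nn (m+1)))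
        (fun r _ => hAlim (cell Nn φ (m+1) (k * Nn (m+1) + r)))
      refine this.congr fun i => ?_
      exact (hsubdiv i m k).symm
    exact tendsto_nhds_unique (hAlim _) h1
  have hA1 : ∀ m, ∑ k ∈ Finset.range (lev Nn m), A (cell Nn φ m k) = 1 := by
    intro m
    have h1 : Tendsto (fun i => ∑ k ∈ Finset.range (lev Nn m), (μ i (cell Nn φ m k)).toReal)
        (U : Filter ℕ) (𝓝 (∑ k ∈ Finset.range (lev Nn m), A (cell Nn φ m k))) :=
      tendsto_finset_sum _ (fun k _ => hAlim _)
    have h2 : Tendsto (fun i => ∑ k ∈ Finset.range (lev Nn m), (μ i (cell Nn φ m k)).toReal)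
        (U : Filter ℕ) (𝓝 1) := by
      refine tendsto_const_nhds.congr fun i => (hsumcells i m).symm
    exact tendsto_nhds_unique h1 h2
  have hNonempty : ∀ m k, A (cell Nn φ m k) ≠ 0 → (cell Nn φ m k).Nonempty := by
    intro m k h
    by_contra hne
    have hcell : cell Nn φ m k = ∅ := Set.not_nonempty_iff_eq_empty.1 hne
    apply h
    have : Tendsto (fun i => (μ i (cell Nn φ m k)).toReal) (U : Filter ℕ) (𝓝 0) := by
      refine tendsto_const_nhds.congr fun i => ?_
      rw [hcell]; simp
    exact tendsto_nhds_unique (hAlim _) this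
  -- chosen points
  have hqex : ∀ m k, ∃ p : X, (cell Nn φ m k).Nonempty → p ∈ cell Nn φ m k := by
    intro m k
    by_cases h : (cell Nn φ m k).Nonempty
    · obtain ⟨p, hp⟩ := h; exact ⟨p, fun _ => hp⟩
    · exact ⟨Classical.arbitrary X, fun h' => absurd h' h⟩
  choose q hq using hqex
  -- clamp
  set clamp : ℝ → ℝ := (Set.Ico (0:ℝ) 1).piecewise id (fun _ => 0) with hclamp
  have hclampmem : ∀ t, clamp t ∈ Set.Ico (0:ℝ) 1 := by
    intro t
    by_cases h : t ∈ Set.Ico (0:ℝ) 1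
    · rwa [hclamp, Set.piecewise_eq_of_mem _ _ _ h]
    · rw [hclamp, Set.piecewise_eq_of_notMem _ _ _ h]
      exact ⟨le_refl 0, by norm_num⟩
  have hclampid : ∀ t ∈ Set.Ico (0:ℝ) 1, clamp t = t :=
    fun t ht => Set.piecewise_eq_of_mem _ _ _ ht
  have hclampmeas : Measurable clamp :=
    Measurable.piecewise measurableSet_Ico measurable_id measurable_const
  -- quantile maps
  set gm : ℕ → ℝ → X := fun m t => q m (km A Nn φ m (clamp t)) with hgm
  have hIcoSub : ∀ m k, k < lev Nn m →
      Set.Ico (ell A Nn φ m k) (ell A Nn φ m (k+1)) ⊆ Set.Ico (0:ℝ) 1 := by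
    intro m k hk t ht
    constructor
    · refine le_trans ?_ ht.1
      unfold ell
      exact Finset.sum_nonneg fun j _ => hA0 m j
    · refine lt_of_lt_of_le ht.2 ?_
      have h1 : ell A Nn φ m (k+1) ≤ ell A Nn φ m (lev Nn m) := ell_mono hA0 m hk
      rw [show ell A Nn φ m (lev Nn m) = 1 from hA1 m] at h1
      exact h1
  have hkmchar : ∀ m k (t : ℝ), t ∈ Set.Ico (0:ℝ) 1 →
      (km A Nn φ m t = k ↔ k < lev Nn m ∧ t ∈ Set.Ico (ell A Nn φ m k) (ell A Nn φ m (k+1))) := by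
    intro m k t ht
    constructor
    · rintro rfl
      obtain ⟨h1, h2, h3⟩ := km_spec hNpos hA0 hA1 m ht
      exact ⟨h1, h2, h3⟩
    · rintro ⟨h1, h2, h3⟩
      exact km_unique hNpos hA0 hA1 m ht h1 h2 h3
  have hkmmeas : ∀ m, Measurable (fun t => km A Nn φ m (clamp t)) := by
    intro m
    apply measurable_to_countable'
    intro k
    by_cases hk : k < lev Nn m
    · have : (fun t => km A Nn φ m (clamp t)) ⁻¹' {k}
          = clamp ⁻¹' (Set.Ico (ell A Nn φ m k) (ell A Nn φ m (k+1))) := by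
        ext t
        simp only [Set.mem_preimage, Set.mem_singleton_iff]
        rw [hkmchar m k (clamp t) (hclampmem t)]
        exact ⟨fun h => h.2, fun h => ⟨hk, h⟩⟩
      rw [this]
      exact hclampmeas measurableSet_Ico
    · have : (fun t => km A Nn φ m (clamp t)) ⁻¹' {k} = ∅ := by
        ext t
        simp only [Set.mem_preimage, Set.mem_singleton_iff, Set.mem_empty_iff_false, iff_false]
        intro h
        exact hk (h ▸ (km_spec hNpos hA0 hA1 m (hclampmem t)).1)
      rw [this]
      exact MeasurableSet.empty
  have hgmmeas : ∀ m, Measurable (gm m) :=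
    fun m => Measurable.comp (measurable_from_top (f := q m)) (hkmmeas m)
  have hApos : ∀ m (t : ℝ), A (cell Nn φ m (km A Nn φ m (clamp t))) ≠ 0 := by
    intro m t
    obtain ⟨h1, h2, h3⟩ := km_spec hNpos hA0 hA1 m (hclampmem t)
    rw [ell_succ] at h3
    intro h0
    rw [h0, add_zero] at h3
    exact absurd h2 (not_le.2 h3)
  have hgmem : ∀ m t, gm m t ∈ cell Nn φ m (km A Nn φ m (clamp t)) :=
    fun m t => hq m _ (hNonempty m _ (hApos m t))
  have hgmem' : ∀ m m' (t : ℝ), m ≤ m' → gm m' t ∈ cell Nn φ m (km A Nn φ m (clamp t)) :=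
    fun m m' t h =>
      cell_km_subset hNpos hA0 hA1 hφlt hAadd (hclampmem t) h (hgmem m' t)
  have hdistgm : ∀ m m' (t : ℝ), m ≤ m' → dist (gm m' t) (gm m t) ≤ 2 * (1/2:ℝ)^m := by
    intro m m' t h
    have h1 : cIdx Nn φ m (gm m' t) = km A Nn φ m (clamp t) := hgmem' m m' t h
    have h2 : cIdx Nn φ m (gm m t) = km A Nn φ m (clamp t) := hgmem m t
    exact dist_le_of_cell pts hφlt hφd m (h1.trans h2.symm)
  have hGex : ∀ t : ℝ, ∃ p : X, Tendsto (fun m => gm m t) atTop (𝓝 p) := by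
    intro t
    apply cauchySeq_tendsto_of_complete
    apply cauchySeq_of_le_geometric (1/2 : ℝ) 2 (by norm_num)
    intro n
    rw [dist_comm]
    exact hdistgm n (n+1) t (Nat.le_succ n)
  choose G hG using hGex
  have hGmeas : Measurable G :=
    measurable_of_tendsto_metrizable (fun m => hgmmeas m) (tendsto_pi_nhds.2 hG)
  have hGdist : ∀ m (t : ℝ), dist (G t) (gm m t) ≤ 2 * (1/2:ℝ)^m := by
    intro m t
    have : Tendsto (fun m' => dist (gm m' t) (gm m t)) atTop (𝓝 (dist (G t) (gm m t))) :=
      (hG t).dist tendsto_const_nhds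
    refine le_of_tendsto this ?_
    filter_upwards [eventually_ge_atTop m] with m' hm'
    exact hdistgm m m' t hm'
  -- the limit measure
  set ν : Measure X := (volume.restrict (Set.Ico (0:ℝ) 1)).map G with hν
  have hν1 : IsProbabilityMeasure ν := by
    constructor
    rw [hν, Measure.map_apply hGmeas MeasurableSet.univ, Set.preimage_univ,
      Measure.restrict_apply MeasurableSet.univ, Set.univ_inter, Real.volume_Ico]
    norm_num
  refine ⟨ν, hν1, ?_⟩
  intro f
  have hfb : ∀ x : X, ‖f x‖ ≤ ‖f‖ := fun x => f.norm_coe_le_norm x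
  rw [Metric.tendsto_nhds]
  intro ε hε
  obtain ⟨δ, hδpos, hδ⟩ := Metric.uniformContinuous_iff.1
    (CompactSpace.uniformContinuous_of_continuous f.continuous) (ε/4) (by positivity)
  obtain ⟨m, hm⟩ : ∃ m : ℕ, 2*(1/2:ℝ)^m < δ := by
    have h2 : Tendsto (fun m : ℕ => 2*(1/2:ℝ)^m) atTop (𝓝 (2*0)) :=
      (tendsto_pow_atTop_nhds_zero_of_lt_one (by norm_num) (by norm_num)).const_mul 2
    rw [mul_zero] at h2
    exact (h2.eventually (gt_mem_nhds hδpos)).exists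
  set T : ℝ := ∑ k ∈ Finset.range (lev Nn m), A (cell Nn φ m k) * f (q m k) with hT
  -- express ∫ f dν through G
  have hmapint : ∫ x, f x ∂ν = ∫ t in Set.Ico (0:ℝ) 1, f (G t) := by
    rw [hν, integral_map hGmeas.aemeasurable f.continuous.aestronglyMeasurable]
  have hint1 : Integrable (fun t => f (G t)) (volume.restrict (Set.Ico (0:ℝ) 1)) :=
    ⟨(f.continuous.measurable.comp hGmeas).aestronglyMeasurable,
      HasFiniteIntegral.of_bounded (C := ‖f‖) (Filter.Eventually.of_forall fun t => hfb (G t))⟩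
  have hint2 : Integrable (fun t => f (gm m t)) (volume.restrict (Set.Ico (0:ℝ) 1)) :=
    ⟨(f.continuous.measurable.comp (hgmmeas m)).aestronglyMeasurable,
      HasFiniteIntegral.of_bounded (C := ‖f‖) (Filter.Eventually.of_forall fun t => hfb (gm m t))⟩
  have hIII1 : |(∫ t in Set.Ico (0:ℝ) 1, f (G t)) - ∫ t in Set.Ico (0:ℝ) 1, f (gm m t)| ≤ ε/4 := by
    rw [← integral_sub hint1 hint2]
    have hnorm := norm_setIntegral_le_of_norm_le_const (μ := volume)
      (s := Set.Ico (0:ℝ) 1) (C := ε/4) (f := fun t => f (G t) - f (gm m t))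
      (by rw [Real.volume_Ico]; exact ENNReal.ofReal_lt_top)
      (fun t _ => by
        have h1 : dist (G t) (gm m t) < δ := lt_of_le_of_lt (hGdist m t) hm
        have h2 := hδ h1
        rw [Real.dist_eq] at h2
        rw [Real.norm_eq_abs]
        exact le_of_lt h2)
    rw [Real.norm_eq_abs] at hnorm
    refine le_trans hnorm ?_
    rw [Real.volume_real_Ico]
    norm_num
  have hIII2 : (∫ t in Set.Ico (0:ℝ) 1, f (gm m t)) = T := by
    have hcover : Set.Ico (0:ℝ) 1
        = ⋃ k ∈ Finset.range (lev Nn m), Set.Ico (ell A Nn φ m k) (ell A Nn φ m (k+1)) := by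
      ext t
      simp only [Set.mem_iUnion, Finset.mem_range]
      constructor
      · intro ht
        obtain ⟨h1, h2, h3⟩ := km_spec hNpos hA0 hA1 m ht
        exact ⟨km A Nn φ m t, h1, h2, h3⟩
      · rintro ⟨k, hk, hmem⟩
        exact hIcoSub m k hk hmem
    have hdisj : (↑(Finset.range (lev Nn m)) : Set ℕ).Pairwise
        (Function.onFun Disjoint fun k => Set.Ico (ell A Nn φ m k) (ell A Nn φ m (k+1))) := by
      intro k _ k' _ hkk'
      rcases Nat.lt_or_ge k k' with h | h
      · have : ell A Nn φ m (k+1) ≤ ell A Nn φ m k' := ell_mono hA0 m h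
        simp only [Function.onFun]
        rw [Set.Ico_disjoint_Ico]
        exact le_trans (min_le_left _ _) (le_trans this (le_max_right _ _))
      · have hlt : k' < k := by omega
        have : ell A Nn φ m (k'+1) ≤ ell A Nn φ m k := ell_mono hA0 m hlt
        simp only [Function.onFun]
        rw [Set.Ico_disjoint_Ico]
        exact le_trans (min_le_right _ _) (le_trans this (le_max_left _ _))
    have hfmI : ∀ a b : ℝ, IsFiniteMeasure (volume.restrict (Set.Ico a b)) := by
      intro a b
      constructor
      rw [Measure.restrict_apply MeasurableSet.univ, Set.univ_inter, Real.volume_Ico]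
      exact ENNReal.ofReal_lt_top
    have hint3 : ∀ k, IntegrableOn (fun t => f (gm m t))
        (Set.Ico (ell A Nn φ m k) (ell A Nn φ m (k+1))) volume := by
      intro k
      haveI := hfmI (ell A Nn φ m k) (ell A Nn φ m (k+1))
      exact ⟨(f.continuous.measurable.comp (hgmmeas m)).aestronglyMeasurable,
        HasFiniteIntegral.of_bounded (C := ‖f‖)
          (Filter.Eventually.of_forall fun t => hfb (gm m t))⟩
    have hstep : (∫ t in (⋃ k ∈ Finset.range (lev Nn m),
          Set.Ico (ell A Nn φ m k) (ell A Nn φ m (k+1))), f (gm m t))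
        = ∑ k ∈ Finset.range (lev Nn m),
            ∫ t in Set.Ico (ell A Nn φ m k) (ell A Nn φ m (k+1)), f (gm m t) :=
      integral_biUnion_finset _ (fun k _ => measurableSet_Ico) hdisj (fun k _ => hint3 k)
    rw [hcover, hstep]
    apply Finset.sum_congr rfl
    intro k hk
    have hk' : k < lev Nn m := Finset.mem_range.1 hk
    have heq : Set.EqOn (fun t => f (gm m t)) (fun _ => f (q m k))
        (Set.Ico (ell A Nn φ m k) (ell A Nn φ m (k+1))) := by
      intro t ht
      have htI := hIcoSub m k hk' ht
      have hkmt : km A Nn φ m (clamp t) = k := by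
        rw [hclampid t htI]
        exact (hkmchar m k t htI).2 ⟨hk', ht⟩
      show f (gm m t) = f (q m k)
      rw [hgm]
      simp only
      rw [hkmt]
    rw [setIntegral_congr_fun measurableSet_Ico heq, setIntegral_const, measureReal_def, Real.volume_Ico,
      ENNReal.toReal_ofReal (by rw [ell_succ]; have := hA0 m k; linarith),
      ell_succ, smul_eq_mul]
    ring
  -- per-i approximation
  have hTi : ∀ i, |(∫ x, f x ∂(μ i))
      - ∑ k ∈ Finset.range (lev Nn m), (μ i (cell Nn φ m k)).toReal * f (q m k)| ≤ ε/4 := by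
    intro i
    haveI := hμ i
    have hfi : Integrable (fun x => f x) (μ i) :=
      ⟨f.continuous.aestronglyMeasurable,
        HasFiniteIntegral.of_bounded (C := ‖f‖) (Filter.Eventually.of_forall hfb)⟩
    have hdecomp : ∫ x, f x ∂(μ i)
        = ∑ k ∈ Finset.range (lev Nn m), ∫ x in cell Nn φ m k, f x ∂(μ i) := by
      rw [← setIntegral_univ (f := fun x => f x) (μ := μ i),
        univ_eq_biUnion_cell (Nn := Nn) (φ := φ) hφlt m,
        integral_biUnion_finset _ (fun k _ => hcellmeas m k)
          (fun k _ k' _ hkk' => cell_disjoint m hkk') (fun k _ => hfi.integrableOn)]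
    rw [hdecomp, ← Finset.sum_sub_distrib]
    refine le_trans (Finset.abs_sum_le_sum_abs _ _) ?_
    have hbound : ∀ k ∈ Finset.range (lev Nn m),
        |(∫ x in cell Nn φ m k, f x ∂(μ i)) - (μ i (cell Nn φ m k)).toReal * f (q m k)|
          ≤ (ε/4) * (μ i (cell Nn φ m k)).toReal := by
      intro k _
      by_cases hne : (cell Nn φ m k).Nonempty
      · have hqk : q m k ∈ cell Nn φ m k := hq m k hne
        have hrw : (∫ x in cell Nn φ m k, f x ∂(μ i)) - (μ i (cell Nn φ m k)).toReal * f (q m k)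
            = ∫ x in cell Nn φ m k, (f x - f (q m k)) ∂(μ i) := by
          rw [integral_sub hfi.integrableOn
            (integrableOn_const (measure_ne_top _ _)), setIntegral_const, measureReal_def,
            smul_eq_mul]
        rw [hrw]
        have hnorm := norm_setIntegral_le_of_norm_le_const (μ := μ i)
          (s := cell Nn φ m k) (C := ε/4) (f := fun x => f x - f (q m k))
          (measure_lt_top _ _)
          (fun x hx => by
            have hcd : cIdx Nn φ m x = k := hx
            have hcq : cIdx Nn φ m (q m k) = k := hqk
            have hdxy : dist x (q m k) ≤ 2*(1/2:ℝ)^m :=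
              dist_le_of_cell pts hφlt hφd m (hcd.trans hcq.symm)
            have h2 := hδ (lt_of_le_of_lt hdxy hm)
            rw [Real.dist_eq] at h2
            rw [Real.norm_eq_abs]
            exact le_of_lt h2)
        rw [Real.norm_eq_abs] at hnorm
        exact hnorm
      · rw [Set.not_nonempty_iff_eq_empty.1 hne]
        simp
    refine le_trans (Finset.sum_le_sum hbound) ?_
    rw [← Finset.mul_sum, hsumcells i m, mul_one]
  -- convergence of the finite sums along the ultrafilter
  have hTi_lim : Tendsto (fun i => ∑ k ∈ Finset.range (lev Nn m),
      (μ i (cell Nn φ m k)).toReal * f (q m k)) (U : Filter ℕ) (𝓝 T) :=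
    tendsto_finset_sum _ (fun k _ => (hAlim (cell Nn φ m k)).mul_const _)
  have hev : ∀ᶠ i in (U : Filter ℕ), |(∑ k ∈ Finset.range (lev Nn m),
      (μ i (cell Nn φ m k)).toReal * f (q m k)) - T| < ε/4 := by
    have h3 := Metric.tendsto_nhds.1 hTi_lim (ε/4) (by positivity)
    simpa [Real.dist_eq] using h3
  filter_upwards [hev] with i hi
  rw [Real.dist_eq]
  have h1 := hTi i
  have h3 : |T - ∫ x, f x ∂ν| ≤ ε/4 := by
    rw [hmapint, ← hIII2]
    rw [abs_sub_comm]
    exact hIII1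
  set Si := ∑ k ∈ Finset.range (lev Nn m), (μ i (cell Nn φ m k)).toReal * f (q m k)
  have t1 := abs_sub_le (∫ x, f x ∂(μ i)) Si (∫ x, f x ∂ν)
  have t2 := abs_sub_le Si T (∫ x, f x ∂ν)
  linarith

end WKAux


open MeasureTheory Filter Topology
open scoped ENNReal NNReal

/-- Any uniform limit `u` of a subsequence `u_{λ_i}` (`λ_i → 1⁻`) of discounted
solutions satisfies, for every continuous subsolution `w` of the critical equation
(critical value `0`), `u ≥ w - sup_{μ ∈ M₀} ∫ w dμ`, where `M₀` is the set of
projected Mather measures. -/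
theorem limit_ge_subsolution_minus_sup_integral
    {M : Type*} [MetricSpace M] [CompactSpace M] [Nonempty M]
    [MeasurableSpace M] [BorelSpace M]
    (c : M × M → ℝ) (hc : Continuous c)
    (hcrit : ∃ v : C(M, ℝ), ∀ x : M, v x = ⨅ y : M, (v y + c (y, x)))
    (us : ℝ → C(M, ℝ))
    (hus : ∀ lam : ℝ, 0 < lam → lam < 1 →
      ∀ x : M, us lam x = ⨅ y : M, (lam * us lam y + c (y, x)))
    (lams : ℕ → ℝ) (h0 : ∀ i, 0 < lams i) (h1 : ∀ i, lams i < 1)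
    (hlims : Tendsto lams atTop (𝓝 1))
    (u : C(M, ℝ))
    (hconv : TendstoUniformly (fun i x => us (lams i) x) u atTop)
    (w : C(M, ℝ)) (hw : ∀ x : M, w x ≤ ⨅ y : M, (w y + c (y, x))) :
    ∀ x : M, u x ≥ w x - sSup {r : ℝ | ∃ μt : Measure (M × M),
      IsProbabilityMeasure μt ∧ μt.map Prod.fst = μt.map Prod.snd ∧
      (∫ z, c z ∂μt = 0) ∧ r = ∫ y, w y ∂(μt.map Prod.fst)} := by
  classical
  intro x
  set cc : C(M × M, ℝ) := ⟨c, hc⟩ with hcc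
  -- minimizing successor maps
  have hmin : ∀ i : ℕ, ∃ nx : M → M, ∀ z : M,
      us (lams i) z = lams i * us (lams i) (nx z) + c (nx z, z) := by
    intro i
    have hex : ∀ z : M, ∃ y : M,
        us (lams i) z = lams i * us (lams i) y + c (y, z) := by
      intro z
      have hcont : Continuous fun y : M => lams i * us (lams i) y + c (y, z) := by
        apply Continuous.add
        · exact continuous_const.mul (us (lams i)).continuous
        · exact hc.comp (continuous_id.prodMk continuous_const)
      obtain ⟨y, -, hy⟩ := isCompact_univ.exists_isMinOn Set.univ_nonempty hcont.continuousOn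
      have hy' : ∀ y' : M, lams i * us (lams i) y + c (y, z)
          ≤ lams i * us (lams i) y' + c (y', z) := fun y' => hy trivial
      have hbdd : BddBelow (Set.range fun y' : M => lams i * us (lams i) y' + c (y', z)) := by
        refine ⟨lams i * us (lams i) y + c (y, z), ?_⟩
        rintro v ⟨y', rfl⟩
        exact hy' y'
      refine ⟨y, ?_⟩
      rw [hus (lams i) (h0 i) (h1 i) z]
      exact le_antisymm (ciInf_le hbdd y) (le_ciInf hy')
    choose nx hnx using hex
    exact ⟨nx, hnx⟩
  choose nxt hnxt using hmin
  set ξ : ℕ → ℕ → M := fun i k => (nxt i)^[k] x with hξ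
  have hξ0 : ∀ i, ξ i 0 = x := fun i => rfl
  have hξs : ∀ i k, us (lams i) (ξ i k)
      = lams i * us (lams i) (ξ i (k+1)) + c (ξ i (k+1), ξ i k) := by
    intro i k
    have : ξ i (k+1) = nxt i (ξ i k) := Function.iterate_succ_apply' (nxt i) k x
    rw [this]
    exact hnxt i (ξ i k)
  -- summability helper
  have hsummable : ∀ (i : ℕ) (v : ℕ → ℝ) (C : ℝ), (∀ k, ‖v k‖ ≤ C) →
      Summable (fun k => lams i ^ k * v k) := by
    intro i v C hv
    apply Summable.of_norm_bounded
      ((summable_geometric_of_lt_one (h0 i).le (h1 i)).mul_left C)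
    intro k
    rw [norm_mul, norm_pow, Real.norm_eq_abs (lams i), abs_of_nonneg (h0 i).le, mul_comm]
    exact mul_le_mul_of_nonneg_right (hv k) (pow_nonneg (h0 i).le k)
  -- telescoping sum
  have htel : ∀ i n, us (lams i) x = lams i ^ n * us (lams i) (ξ i n)
      + ∑ k ∈ Finset.range n, lams i ^ k * c (ξ i (k+1), ξ i k) := by
    intro i n
    induction n with
    | zero => simp [hξ0 i]
    | succ n ih =>
        rw [ih, Finset.sum_range_succ, hξs i n]
        ring
  have hDsum : ∀ i, HasSum (fun k => lams i ^ k * c (ξ i (k+1), ξ i k)) (us (lams i) x) := by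
    intro i
    have hS : Summable (fun k => lams i ^ k * c (ξ i (k+1), ξ i k)) :=
      hsummable i _ ‖cc‖ (fun k => cc.norm_coe_le_norm (ξ i (k+1), ξ i k))
    have h2 : Tendsto (fun n => ∑ k ∈ Finset.range n, lams i ^ k * c (ξ i (k+1), ξ i k))
        atTop (𝓝 (∑' k, lams i ^ k * c (ξ i (k+1), ξ i k))) := hS.hasSum.tendsto_sum_nat
    have h3 : Tendsto (fun n => ∑ k ∈ Finset.range n, lams i ^ k * c (ξ i (k+1), ξ i k))
        atTop (𝓝 (us (lams i) x)) := by
      have h4 : Tendsto (fun n => lams i ^ n * us (lams i) (ξ i n)) atTop (𝓝 0) := by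
        apply squeeze_zero_norm (a := fun n => ‖us (lams i)‖ * lams i ^ n)
        · intro n
          rw [norm_mul, norm_pow, Real.norm_eq_abs (lams i), abs_of_nonneg (h0 i).le, mul_comm]
          exact mul_le_mul_of_nonneg_right ((us (lams i)).norm_coe_le_norm (ξ i n))
            (pow_nonneg (h0 i).le n)
        · rw [show (0:ℝ) = ‖us (lams i)‖ * 0 by ring]
          exact (tendsto_pow_atTop_nhds_zero_of_lt_one (h0 i).le (h1 i)).const_mul _
      have h5 : Tendsto (fun n => us (lams i) x - lams i ^ n * us (lams i) (ξ i n))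
          atTop (𝓝 (us (lams i) x - 0)) := tendsto_const_nhds.sub h4
      rw [sub_zero] at h5
      refine h5.congr fun n => ?_
      rw [htel i n]; ring
    rw [← tendsto_nhds_unique h2 h3]
    exact hS.hasSum
  -- the discounted measures
  set μm : ℕ → Measure (M × M) := fun i => Measure.sum
    (fun k => (ENNReal.ofReal ((1 - lams i) * lams i ^ k))
      • Measure.dirac (ξ i (k+1), ξ i k)) with hμm
  have hμprob : ∀ i, IsProbabilityMeasure (μm i) := by
    intro i
    constructor
    rw [hμm]
    rw [Measure.sum_apply _ MeasurableSet.univ]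
    simp only [Measure.smul_apply, measure_univ, smul_eq_mul, mul_one]
    have h01 : (0:ℝ) ≤ lams i := (h0 i).le
    have h1l : (0:ℝ) ≤ 1 - lams i := by linarith [h1 i]
    have hofsub : (1:ℝ≥0∞) - ENNReal.ofReal (lams i) = ENNReal.ofReal (1 - lams i) := by
      rw [ENNReal.ofReal_sub 1 h01, ENNReal.ofReal_one]
    calc ∑' k, ENNReal.ofReal ((1 - lams i) * lams i ^ k)
        = ∑' k, ENNReal.ofReal (1 - lams i) * (ENNReal.ofReal (lams i))^k := by
          apply tsum_congr; intro k
          rw [ENNReal.ofReal_mul h1l, ENNReal.ofReal_pow h01]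
      _ = ENNReal.ofReal (1 - lams i) * ∑' k, (ENNReal.ofReal (lams i))^k :=
          ENNReal.tsum_mul_left
      _ = ENNReal.ofReal (1 - lams i) * (1 - ENNReal.ofReal (lams i))⁻¹ := by
          rw [ENNReal.tsum_geometric]
      _ = 1 := by
          rw [hofsub]
          exact ENNReal.mul_inv_cancel
            (ne_of_gt (ENNReal.ofReal_pos.2 (by linarith [h1 i]))) ENNReal.ofReal_ne_top
  -- integrals against the discounted measures
  have hμint : ∀ (i : ℕ) (g : C(M × M, ℝ)), (∫ z, g z ∂(μm i))
      = ∑' k, (1 - lams i) * lams i ^ k * g (ξ i (k+1), ξ i k) := by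
    intro i g
    haveI := hμprob i
    have hint : Integrable (fun z => g z) (μm i) :=
      ⟨g.continuous.aestronglyMeasurable,
        HasFiniteIntegral.of_bounded (C := ‖g‖)
          (Filter.Eventually.of_forall fun z => g.norm_coe_le_norm z)⟩
    rw [hμm] at hint ⊢
    rw [integral_sum_measure hint]
    apply tsum_congr; intro k
    rw [integral_smul_measure, integral_dirac, ENNReal.toReal_ofReal
      (mul_nonneg (by linarith [h1 i]) (pow_nonneg (h0 i).le k)), smul_eq_mul]
  -- shift identity
  have hshift : ∀ (i : ℕ) (g : C(M, ℝ)), ∑' k, lams i ^ k * g (ξ i k)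
      = g x + lams i * ∑' k, lams i ^ k * g (ξ i (k+1)) := by
    intro i g
    have hsum : Summable (fun k => lams i ^ k * g (ξ i k)) :=
      hsummable i _ ‖g‖ (fun k => g.norm_coe_le_norm (ξ i k))
    rw [hsum.tsum_eq_zero_add, pow_zero, one_mul, hξ0 i]
    congr 1
    have heach : ∀ k, lams i ^ (k+1) * g (ξ i (k+1))
        = lams i * (lams i ^ k * g (ξ i (k+1))) := by
      intro k; rw [pow_succ]; ring
    rw [tsum_congr heach, tsum_mul_left]
  -- per-i projection integral formulas
  have hfstint : ∀ (i : ℕ) (g : C(M, ℝ)),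
      (∫ z, (g.comp ⟨Prod.fst, continuous_fst⟩) z ∂(μm i))
        = (1 - lams i) * ∑' k, lams i ^ k * g (ξ i (k+1)) := by
    intro i g
    rw [hμint i (g.comp ⟨Prod.fst, continuous_fst⟩), ← tsum_mul_left]
    apply tsum_congr; intro k
    show (1 - lams i) * lams i ^ k * g (ξ i (k+1)) = (1 - lams i) * (lams i ^ k * g (ξ i (k+1)))
    ring
  have hsndint : ∀ (i : ℕ) (g : C(M, ℝ)),
      (∫ z, (g.comp ⟨Prod.snd, continuous_snd⟩) z ∂(μm i))
        = (1 - lams i) * (g x + lams i * ∑' k, lams i ^ k * g (ξ i (k+1))) := by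
    intro i g
    rw [hμint i (g.comp ⟨Prod.snd, continuous_snd⟩), ← hshift i g, ← tsum_mul_left]
    apply tsum_congr; intro k
    show (1 - lams i) * lams i ^ k * g (ξ i k) = (1 - lams i) * (lams i ^ k * g (ξ i k))
    ring
  have hSbd : ∀ (i : ℕ) (g : C(M, ℝ)),
      (1 - lams i) * |∑' k, lams i ^ k * g (ξ i (k+1))| ≤ ‖g‖ := by
    intro i g
    have h1l : (0:ℝ) < 1 - lams i := by linarith [h1 i]
    have hb : ‖∑' k, lams i ^ k * g (ξ i (k+1))‖ ≤ ‖g‖ * (1 - lams i)⁻¹ := by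
      apply tsum_of_norm_bounded ((hasSum_geometric_of_lt_one (h0 i).le (h1 i)).mul_left ‖g‖)
      intro k
      rw [norm_mul, norm_pow, Real.norm_eq_abs (lams i), abs_of_nonneg (h0 i).le, mul_comm]
      exact mul_le_mul_of_nonneg_right (g.norm_coe_le_norm _) (pow_nonneg (h0 i).le k)
    rw [Real.norm_eq_abs] at hb
    calc (1 - lams i) * |∑' k, lams i ^ k * g (ξ i (k+1))|
        ≤ (1 - lams i) * (‖g‖ * (1 - lams i)⁻¹) := by
          exact mul_le_mul_of_nonneg_left hb h1l.le
      _ = ‖g‖ := by field_simp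
  -- subsolution step
  have hsubw : ∀ i k, w (ξ i k) - w (ξ i (k+1)) ≤ c (ξ i (k+1), ξ i k) := by
    intro i k
    have hbdd : BddBelow (Set.range fun y : M => w y + c (y, ξ i k)) := by
      refine ⟨-(‖w‖ + ‖cc‖), ?_⟩
      rintro v ⟨y, rfl⟩
      have h1' := (abs_le.1 (by simpa [Real.norm_eq_abs] using w.norm_coe_le_norm y)).1
      have h2' : -‖cc‖ ≤ c (y, ξ i k) :=
        (abs_le.1 (by have := cc.norm_coe_le_norm (y, ξ i k); rw [Real.norm_eq_abs] at this; exact this)).1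
      show -(‖w‖ + ‖cc‖) ≤ w y + c (y, ξ i k)
      linarith
    have h3 := (hw (ξ i k)).trans (ciInf_le hbdd (ξ i (k+1)))
    linarith
  set wfst : C(M × M, ℝ) := w.comp ⟨Prod.fst, continuous_fst⟩ with hwfst
  have hkey : ∀ i, w x - (∫ z, wfst z ∂(μm i)) ≤ us (lams i) x := by
    intro i
    have hSw' : Summable (fun k => lams i ^ k * w (ξ i (k+1))) :=
      hsummable i _ ‖w‖ (fun k => w.norm_coe_le_norm _)
    have hSw : Summable (fun k => lams i ^ k * w (ξ i k)) :=
      hsummable i _ ‖w‖ (fun k => w.norm_coe_le_norm _)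
    have hle : (∑' k, (lams i ^ k * w (ξ i k) - lams i ^ k * w (ξ i (k+1))))
        ≤ ∑' k, lams i ^ k * c (ξ i (k+1), ξ i k) := by
      apply Summable.tsum_le_tsum _ (hSw.sub hSw') (hDsum i).summable
      intro k
      have hp : (0:ℝ) ≤ lams i ^ k := pow_nonneg (h0 i).le k
      calc lams i ^ k * w (ξ i k) - lams i ^ k * w (ξ i (k+1))
          = lams i ^ k * (w (ξ i k) - w (ξ i (k+1))) := by ring
        _ ≤ lams i ^ k * c (ξ i (k+1), ξ i k) :=
            mul_le_mul_of_nonneg_left (hsubw i k) hp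
    rw [hSw.tsum_sub hSw', hshift i w, (hDsum i).tsum_eq] at hle
    rw [hwfst, hfstint i w]
    set S' := ∑' k, lams i ^ k * w (ξ i (k+1))
    linarith
  -- weak limit
  obtain ⟨ν, hν1, hνlim⟩ := WKAux.exists_weak_limit μm hμprob (Ultrafilter.of atTop)
  haveI : (↑(Ultrafilter.of (atTop : Filter ℕ)) : Filter ℕ).NeBot := (Ultrafilter.of atTop).neBot
  have hUle : (↑(Ultrafilter.of (atTop : Filter ℕ)) : Filter ℕ) ≤ atTop := Ultrafilter.of_le _
  -- the cost integral vanishes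
  have hc0 : (∫ z, cc z ∂ν) = 0 := by
    have h3 : ∀ i, (∫ z, cc z ∂(μm i)) = (1 - lams i) * us (lams i) x := by
      intro i
      rw [hμint i cc, ← (hDsum i).tsum_eq, ← tsum_mul_left]
      apply tsum_congr; intro k
      show (1 - lams i) * lams i ^ k * c (ξ i (k+1), ξ i k)
        = (1 - lams i) * (lams i ^ k * c (ξ i (k+1), ξ i k))
      ring
    have h4 : Tendsto (fun i => (1 - lams i) * us (lams i) x) atTop (𝓝 ((1-1) * u x)) :=
      (tendsto_const_nhds.sub hlims).mul (hconv.tendsto_at x)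
    rw [show ((1:ℝ)-1) * u x = 0 by ring] at h4
    have h2 : Tendsto (fun i => ∫ z, cc z ∂(μm i)) atTop (𝓝 0) :=
      h4.congr (fun i => (h3 i).symm)
    exact tendsto_nhds_unique (hνlim cc) (h2.mono_left hUle)
  -- closedness of the limit measure
  haveI := hν1
  have hfstsnd : ν.map Prod.fst = ν.map Prod.snd := by
    haveI : IsProbabilityMeasure (ν.map Prod.fst) :=
      Measure.isProbabilityMeasure_map measurable_fst.aemeasurable
    apply ext_of_forall_lintegral_eq_of_IsFiniteMeasure
    intro f
    set g : C(M, ℝ) := ⟨fun y => (f y : ℝ), NNReal.continuous_coe.comp f.continuous⟩ with hg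
    set gfst : C(M × M, ℝ) := g.comp ⟨Prod.fst, continuous_fst⟩ with hgfst
    set gsnd : C(M × M, ℝ) := g.comp ⟨Prod.snd, continuous_snd⟩ with hgsnd
    have hgreal : (∫ z, gfst z ∂ν) = ∫ z, gsnd z ∂ν := by
      have hdif : Tendsto (fun i => (∫ z, gfst z ∂(μm i)) - (∫ z, gsnd z ∂(μm i)))
          atTop (𝓝 0) := by
        apply squeeze_zero_norm (a := fun i => (1 - lams i) * (2*‖g‖))
        · intro i
          have h1l : (0:ℝ) ≤ 1 - lams i := by linarith [h1 i]
          have e1 : (∫ z, gfst z ∂(μm i)) - (∫ z, gsnd z ∂(μm i))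
              = (1 - lams i) * ((1 - lams i) * ∑' k, lams i ^ k * g (ξ i (k+1)))
                - (1 - lams i) * g x := by
            rw [hgfst, hgsnd, hfstint i g, hsndint i g]; ring
          rw [Real.norm_eq_abs, e1]
          have hb1 := hSbd i g
          have habs : |(1 - lams i) * ((1 - lams i) * ∑' k, lams i ^ k * g (ξ i (k+1)))
              - (1 - lams i) * g x|
              ≤ |(1 - lams i) * ((1 - lams i) * ∑' k, lams i ^ k * g (ξ i (k+1)))|
                + |(1 - lams i) * g x| := abs_sub _ _
          have h2' : |(1 - lams i) * ((1 - lams i) * ∑' k, lams i ^ k * g (ξ i (k+1)))|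
              = (1 - lams i) * ((1 - lams i) * |∑' k, lams i ^ k * g (ξ i (k+1))|) := by
            rw [abs_mul, abs_mul, abs_of_nonneg h1l]
          have h3' : |(1 - lams i) * g x| = (1 - lams i) * |g x| := by
            rw [abs_mul, abs_of_nonneg h1l]
          have h4' : (1 - lams i) * ((1 - lams i) * |∑' k, lams i ^ k * g (ξ i (k+1))|)
              ≤ (1 - lams i) * ‖g‖ := mul_le_mul_of_nonneg_left hb1 h1l
          have h5' : (1 - lams i) * |g x| ≤ (1 - lams i) * ‖g‖ :=
            mul_le_mul_of_nonneg_left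
              (by simpa [Real.norm_eq_abs] using g.norm_coe_le_norm x) h1l
          calc |(1 - lams i) * ((1 - lams i) * ∑' k, lams i ^ k * g (ξ i (k+1)))
              - (1 - lams i) * g x|
              ≤ (1 - lams i) * ((1 - lams i) * |∑' k, lams i ^ k * g (ξ i (k+1))|)
                + (1 - lams i) * |g x| := by rw [← h2', ← h3']; exact habs
            _ ≤ (1 - lams i) * ‖g‖ + (1 - lams i) * ‖g‖ := add_le_add h4' h5'
            _ = (1 - lams i) * (2*‖g‖) := by ring
        · have hT : Tendsto (fun i => (1 - lams i) * (2*‖g‖)) atTop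
              (𝓝 ((1-1) * (2*‖g‖))) := (tendsto_const_nhds.sub hlims).mul_const _
          rw [show ((1:ℝ)-1) * (2*‖g‖) = 0 by ring] at hT
          exact hT
      have h6 := tendsto_nhds_unique ((hνlim gfst).sub (hνlim gsnd)) (hdif.mono_left hUle)
      linarith
    rw [lintegral_map (f := fun y : M => (f y : ℝ≥0∞))
        (by exact measurable_coe_nnreal_ennreal.comp f.continuous.measurable) measurable_fst,
      lintegral_map (f := fun y : M => (f y : ℝ≥0∞))
        (by exact measurable_coe_nnreal_ennreal.comp f.continuous.measurable) measurable_snd]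
    have hInt1 : Integrable (fun z : M × M => ((f z.1 : ℝ))) ν :=
      ⟨(g.continuous.comp continuous_fst).aestronglyMeasurable,
        HasFiniteIntegral.of_bounded (C := ‖g‖)
          (Filter.Eventually.of_forall fun z => g.norm_coe_le_norm z.1)⟩
    have hInt2 : Integrable (fun z : M × M => ((f z.2 : ℝ))) ν :=
      ⟨(g.continuous.comp continuous_snd).aestronglyMeasurable,
        HasFiniteIntegral.of_bounded (C := ‖g‖)
          (Filter.Eventually.of_forall fun z => g.norm_coe_le_norm z.2)⟩
    rw [lintegral_coe_eq_integral (fun z : M × M => f z.1) hInt1,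
      lintegral_coe_eq_integral (fun z : M × M => f z.2) hInt2]
    have heq : (∫ z : M × M, ((f z.1 : ℝ)) ∂ν) = ∫ z : M × M, ((f z.2 : ℝ)) ∂ν := hgreal
    rw [heq]
  -- pass the inequality to the limit
  have hu : w x - (∫ z, wfst z ∂ν) ≤ u x := by
    have hL : Tendsto (fun i => w x - (∫ z, wfst z ∂(μm i)))
        (↑(Ultrafilter.of (atTop : Filter ℕ)) : Filter ℕ) (𝓝 (w x - ∫ z, wfst z ∂ν)) :=
      tendsto_const_nhds.sub (hνlim wfst)
    have hR : Tendsto (fun i => us (lams i) x)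
        (↑(Ultrafilter.of (atTop : Filter ℕ)) : Filter ℕ) (𝓝 (u x)) :=
      (hconv.tendsto_at x).mono_left hUle
    exact le_of_tendsto_of_tendsto' hL hR hkey
  -- conclude
  have hmapw : (∫ y, w y ∂(ν.map Prod.fst)) = ∫ z, wfst z ∂ν := by
    rw [integral_map measurable_fst.aemeasurable w.continuous.aestronglyMeasurable]
    rfl
  have hmem : (∫ y, w y ∂(ν.map Prod.fst)) ∈ {r : ℝ | ∃ μt : Measure (M × M),
      IsProbabilityMeasure μt ∧ μt.map Prod.fst = μt.map Prod.snd ∧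
      (∫ z, c z ∂μt = 0) ∧ r = ∫ y, w y ∂(μt.map Prod.fst)} :=
    ⟨ν, hν1, hfstsnd, hc0, rfl⟩
  have hbddS : BddAbove {r : ℝ | ∃ μt : Measure (M × M),
      IsProbabilityMeasure μt ∧ μt.map Prod.fst = μt.map Prod.snd ∧
      (∫ z, c z ∂μt = 0) ∧ r = ∫ y, w y ∂(μt.map Prod.fst)} := by
    refine ⟨‖w‖, ?_⟩
    rintro r ⟨μt, hμt1, -, -, rfl⟩
    haveI := hμt1
    haveI : IsProbabilityMeasure (μt.map Prod.fst) :=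
      Measure.isProbabilityMeasure_map measurable_fst.aemeasurable
    have hnorm := norm_integral_le_of_norm_le_const (μ := μt.map Prod.fst)
      (f := fun y => w y) (C := ‖w‖)
      (Filter.Eventually.of_forall fun y => w.norm_coe_le_norm y)
    rw [measureReal_def, measure_univ, ENNReal.toReal_one, mul_one, Real.norm_eq_abs] at hnorm
    exact le_trans (le_abs_self _) hnorm
  have hsup := le_csSup hbddS hmem
  rw [ge_iff_le]
  rw [hmapw] at hsup
  linarith
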